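/- A recurrent function g : ℝ → X (i.e., a recurrent point for the Bebutov shift flow on C(ℝ,X)) is uniformly continuous on ℝ and its range g(ℝ) has compact closure in X. -/

import Mathlib

open Set

/-- The Bebutov shift: (shiftc τ f)(t) = f(t + τ). -/
noncomputable def shiftc {Y : Type*} [TopologicalSpace Y] (τ : ℝ) (f : C(ℝ, Y)) : C(ℝ, Y) :=
  f.comp ⟨fun t => t + τ, by continuity⟩

/-- A continuous function is (Birkhoff) recurrent if it is a recurrent point of the
Bebutov shift flow on C(ℝ,Y) with the compact-open topology: every neighborhood of f
is visited by the shifted function in every interval of some fixed length, and the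
hull of f is compact. -/
def IsRecurrentFn {Y : Type*} [TopologicalSpace Y] (f : C(ℝ, Y)) : Prop :=
  (∀ U ∈ nhds f, ∃ l > (0:ℝ), ∀ a : ℝ, ∃ τ ∈ Icc a (a + l), shiftc τ f ∈ U) ∧
    IsCompact (closure (range fun τ : ℝ => shiftc τ f))

/-- A recurrent function g : ℝ → X is uniformly continuous and
its range has compact closure in X. -/
theorem stmt5 {X : Type*} [MetricSpace X] [CompleteSpace X]
    (g : C(ℝ, X)) (hg : IsRecurrentFn g) :
    UniformContinuous (⇑g) ∧ IsCompact (closure (range (⇑g))) := by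
  obtain ⟨-, hcomp⟩ := hg
  set H := closure (range fun τ : ℝ => shiftc τ g) with hH
  have hmem : ∀ τ : ℝ, shiftc τ g ∈ H := fun τ => subset_closure (mem_range_self τ)
  constructor
  · rw [Metric.uniformContinuous_iff]
    intro ε hε
    have hc : Continuous fun p : C(ℝ, X) × ℝ => dist (p.1 p.2) (p.1 0) :=
      Continuous.dist continuous_eval
        ((continuous_eval_const 0).comp continuous_fst)
    have hopen : IsOpen {p : C(ℝ, X) × ℝ | dist (p.1 p.2) (p.1 0) < ε} :=
      isOpen_lt hc continuous_const
    have hsub : H ×ˢ ({0} : Set ℝ) ⊆ {p : C(ℝ, X) × ℝ | dist (p.1 p.2) (p.1 0) < ε} := by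
      rintro ⟨f, s⟩ ⟨-, hs⟩
      rcases hs with rfl
      simpa using hε
    obtain ⟨u, v, hu, hv, hHu, h0v, huv⟩ :=
      generalized_tube_lemma hcomp isCompact_singleton hopen hsub
    obtain ⟨δ, hδ, hball⟩ := Metric.mem_nhds_iff.1 (hv.mem_nhds (h0v rfl))
    refine ⟨δ, hδ, fun a b hab => ?_⟩
    have hv' : a - b ∈ v := hball (by simpa [Real.dist_eq] using hab)
    have := huv (Set.mk_mem_prod (hHu (hmem b)) hv')
    simpa [shiftc, sub_add_cancel] using this
  · have himg : IsCompact ((fun f : C(ℝ, X) => f 0) '' H) :=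
      hcomp.image (continuous_eval_const 0)
    refine himg.of_isClosed_subset isClosed_closure
      (closure_minimal ?_ himg.isClosed)
    rintro _ ⟨τ, rfl⟩
    exact ⟨shiftc τ g, hmem τ, by simp [shiftc]⟩
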